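/- Let 1 ≤ m ≤ n be integers, p a prime, F : F_{p^n} → F_{p^m}, and c ∈ F_{p^m} with c ≠ 1. Then F is strictly perfect₁ c-nonlinear if and only if W_F(x,b)·conj(W_F(x,b·c)) = 0 for all x ∈ F_{p^n} and all b ∈ F_{p^m}\{0}. -/

import Mathlib

open Finset

noncomputable section

/-- Finite fields `GaloisField p n` are finite; fix a `Fintype` instance. -/
noncomputable instance (p n : ℕ) [Fact p.Prime] : Fintype (GaloisField p n) :=
  Fintype.ofFinite _

/-- `ζ_q = exp(2πi/q)`. -/
noncomputable def zetaC (q : ℕ) : ℂ := Complex.exp (2 * Real.pi * Complex.I / q)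

/-- `ζ_p^t` for `t ∈ F_p`, computed via the integer lift of `t`. -/
noncomputable def eChar (p : ℕ) (t : ZMod p) : ℂ := zetaC p ^ t.val

/-- The absolute trace `Tr_k : F_{p^k} → F_p`. -/
noncomputable def trAbs (p k : ℕ) [Fact p.Prime] (x : GaloisField p k) : ZMod p :=
  Algebra.trace (ZMod p) (GaloisField p k) x

/-- The Walsh transform `W_F(a,b) = ∑_x ζ_p^{Tr_m(b·F(x)) − Tr_n(a·x)}`. -/
noncomputable def Walsh (p n m : ℕ) [Fact p.Prime] (F : GaloisField p n → GaloisField p m)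
    (a : GaloisField p n) (b : GaloisField p m) : ℂ :=
  ∑ x : GaloisField p n, eChar p (trAbs p m (b * F x) - trAbs p n (a * x))

/-- The `c`-crosscorrelation `cC_{F,G}(u,b) = ∑_z ζ_p^{Tr_m(b(F(z+u) − c·G(z)))}`. -/
noncomputable def crossCorr (p n m : ℕ) [Fact p.Prime]
    (F G : GaloisField p n → GaloisField p m) (c : GaloisField p m)
    (u : GaloisField p n) (b : GaloisField p m) : ℂ :=
  ∑ x : GaloisField p n, eChar p (trAbs p m (b * (F (x + u) - c * G x)))

/-- The `c`-autocorrelation `cC_F = cC_{F,F}`. -/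
noncomputable def autoCorr (p n m : ℕ) [Fact p.Prime]
    (F : GaloisField p n → GaloisField p m) (c : GaloisField p m)
    (u : GaloisField p n) (b : GaloisField p m) : ℂ :=
  crossCorr p n m F F c u b

/-- `F` is perfect₁ `c`-nonlinear: `cC_F(u,b) = 0` for all `u ≠ 0`, `b ≠ 0`. -/
def PerfectCNonlinear1 (p n m : ℕ) [Fact p.Prime]
    (F : GaloisField p n → GaloisField p m) (c : GaloisField p m) : Prop :=
  ∀ u : GaloisField p n, u ≠ 0 → ∀ b : GaloisField p m, b ≠ 0 →
    autoCorr p n m F c u b = 0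

/-- `F` is strictly perfect₁ `c`-nonlinear: `cC_F(u,b) = 0` for all `u`, all `b ≠ 0`. -/
def StrictlyPerfectCNonlinear1 (p n m : ℕ) [Fact p.Prime]
    (F : GaloisField p n → GaloisField p m) (c : GaloisField p m) : Prop :=
  ∀ u : GaloisField p n, ∀ b : GaloisField p m, b ≠ 0 →
    autoCorr p n m F c u b = 0

/-- `F` is `c`-differential bent₁:
`W_F(x,b)·conj(W_F(x,bc)) = cC_F(0,b)` for all `x` and all `b ≠ 0`. -/
def CDifferentialBent1 (p n m : ℕ) [Fact p.Prime]
    (F : GaloisField p n → GaloisField p m) (c : GaloisField p m) : Prop :=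
  ∀ x : GaloisField p n, ∀ b : GaloisField p m, b ≠ 0 →
    Walsh p n m F x b * (starRingEnd ℂ) (Walsh p n m F x (b * c)) =
      autoCorr p n m F c 0 b

section lems
variable (p : ℕ) [hp : Fact p.Prime]

lemma zetaC_prim : IsPrimitiveRoot (zetaC p) p :=
  Complex.isPrimitiveRoot_exp p hp.out.ne_zero

lemma zetaC_pow : zetaC p ^ p = 1 := (zetaC_prim p).pow_eq_one

noncomputable def psiP : AddChar (ZMod p) ℂ :=
  haveI : NeZero p := ⟨hp.out.ne_zero⟩
  AddChar.zmodChar p (zetaC_pow p)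

lemma eChar_eq (t : ZMod p) : eChar p t = psiP p t := rfl

lemma eChar_add (s t : ZMod p) : eChar p (s + t) = eChar p s * eChar p t := by
  simp [eChar_eq, AddChar.map_add_eq_mul]

lemma eChar_zero : eChar p 0 = 1 := by simp [eChar_eq]

lemma eChar_conj (t : ZMod p) : (starRingEnd ℂ) (eChar p t) = eChar p (-t) := by
  have h1 : eChar p (-t) * eChar p t = 1 := by
    rw [← eChar_add, neg_add_cancel, eChar_zero]
  have h2 : (starRingEnd ℂ) (eChar p t) * eChar p t = 1 := by
    have : ‖eChar p t‖ = 1 := by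
      simp [eChar, zetaC, map_pow]
      rw [show (2 : ℂ) * Real.pi * Complex.I / p = ((2 * Real.pi / p : ℝ) : ℂ) * Complex.I by
        push_cast; ring]
      rw [Complex.norm_exp_ofReal_mul_I, one_pow]
    rw [mul_comm, Complex.mul_conj', this]
    norm_num
  have ht : eChar p t ≠ 0 := by
    intro h; rw [h, mul_zero] at h2; exact zero_ne_one h2
  exact mul_right_cancel₀ ht (h2.trans h1.symm)

lemma eChar_ne_one {t : ZMod p} (ht : t ≠ 0) : eChar p t ≠ 1 := by
  haveI : NeZero p := ⟨hp.out.ne_zero⟩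
  intro h
  rw [eChar] at h
  have := ((zetaC_prim p).pow_eq_one_iff_dvd t.val).mp h
  have hv : t.val < p := ZMod.val_lt t
  exact ht ((ZMod.val_eq_zero t).mp (Nat.eq_zero_of_dvd_of_lt this hv))
end lems

section main
open scoped Classical
variable (p n m : ℕ) [hp : Fact p.Prime]

lemma eChar_mul_conj (s t : ZMod p) :
    eChar p s * (starRingEnd ℂ) (eChar p t) = eChar p (s - t) := by
  rw [eChar_conj, ← eChar_add, sub_eq_add_neg]

lemma orth (v : GaloisField p n) :
    ∑ a : GaloisField p n, eChar p (trAbs p n (a * v)) =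
      if v = 0 then (Fintype.card (GaloisField p n) : ℂ) else 0 := by
  classical
  split_ifs with h
  · subst h
    simp [trAbs, eChar_zero]
  · let Ψ : AddChar (GaloisField p n) ℂ :=
      (psiP p).compAddMonoidHom (Algebra.trace (ZMod p) (GaloisField p n)).toAddMonoidHom
    have hΨ : ∀ x, Ψ x = eChar p (trAbs p n x) := fun x => rfl
    have hz : ∑ a : GaloisField p n, (AddChar.mulShift Ψ v) a = 0 := by
      apply AddChar.sum_eq_zero_of_ne_one
      rw [AddChar.ne_one_iff]
      obtain ⟨b, hb⟩ : ∃ b, trAbs p n (v * b) ≠ 0 := by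
        by_contra hf
        push_neg at hf
        apply Algebra.trace_ne_zero (ZMod p) (GaloisField p n)
        ext x
        have := hf (v⁻¹ * x)
        rw [← mul_assoc, mul_inv_cancel₀ h, one_mul] at this
        simpa [trAbs] using this
      exact ⟨b, by rw [AddChar.mulShift_apply, hΨ]; exact eChar_ne_one p hb⟩
    rw [← hz]
    exact Finset.sum_congr rfl fun a _ => by
      rw [AddChar.mulShift_apply, hΨ, mul_comm]

variable (F : GaloisField p n → GaloisField p m) (c : GaloisField p m)

lemma walsh_mul (a : GaloisField p n) (b : GaloisField p m) :
    Walsh p n m F a b * (starRingEnd ℂ) (Walsh p n m F a (b * c)) =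
      ∑ u : GaloisField p n, autoCorr p n m F c u b * eChar p (- trAbs p n (a * u)) := by
  unfold Walsh autoCorr crossCorr
  rw [map_sum, Finset.sum_mul_sum]
  simp_rw [Finset.sum_mul, eChar_mul_conj, ← eChar_add]
  rw [Finset.sum_comm]
  have step : ∀ y : GaloisField p n,
      (∑ x : GaloisField p n, eChar p (trAbs p m (b * F x) - trAbs p n (a * x) -
        (trAbs p m (b * c * F y) - trAbs p n (a * y)))) =
      ∑ u : GaloisField p n, eChar p (trAbs p m (b * F (y + u)) - trAbs p n (a * (y + u)) -
        (trAbs p m (b * c * F y) - trAbs p n (a * y))) := fun y =>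
    (Fintype.sum_equiv (Equiv.addLeft y) _ _ fun u => rfl).symm
  simp_rw [step]
  rw [Finset.sum_comm]
  refine Finset.sum_congr rfl fun u _ => Finset.sum_congr rfl fun z _ => ?_
  congr 1
  have h1 : trAbs p n (a * (z + u)) = trAbs p n (a * z) + trAbs p n (a * u) := by
    rw [mul_add]; exact map_add _ _ _
  have h2 : trAbs p m (b * (F (z + u) - c * F z)) =
      trAbs p m (b * F (z + u)) - trAbs p m (b * c * F z) := by
    rw [mul_sub, ← mul_assoc]; exact map_sub _ _ _
  rw [h1, h2]
  ring
end main

theorem statement_2 (p n m : ℕ) [Fact p.Prime] (hm : 1 ≤ m) (hmn : m ≤ n)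
    (F : GaloisField p n → GaloisField p m) (c : GaloisField p m) (hc : c ≠ 1) :
    StrictlyPerfectCNonlinear1 p n m F c ↔
      ∀ x : GaloisField p n, ∀ b : GaloisField p m, b ≠ 0 →
        Walsh p n m F x b * (starRingEnd ℂ) (Walsh p n m F x (b * c)) = 0 := by
  constructor
  · intro h x b hb
    rw [walsh_mul]
    exact Finset.sum_eq_zero fun u _ => by rw [h u b hb, zero_mul]
  · intro h u b hb
    have key : ∀ a : GaloisField p n,
        (∑ v : GaloisField p n,
          autoCorr p n m F c v b * eChar p (- trAbs p n (a * v))) = 0 := fun a => by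
      rw [← walsh_mul]; exact h a b hb
    have S : ∑ a : GaloisField p n, eChar p (trAbs p n (a * u)) *
        (∑ v : GaloisField p n,
          autoCorr p n m F c v b * eChar p (- trAbs p n (a * v))) = 0 :=
      Finset.sum_eq_zero fun a _ => by rw [key a, mul_zero]
    have comb : ∀ (a v : GaloisField p n),
        eChar p (trAbs p n (a * u)) *
          (autoCorr p n m F c v b * eChar p (- trAbs p n (a * v))) =
        autoCorr p n m F c v b * eChar p (trAbs p n (a * (u - v))) := by
      intro a v
      have hxy : trAbs p n (a * (u - v)) = trAbs p n (a * u) + - trAbs p n (a * v) := by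
        simp only [trAbs, mul_sub, map_sub]
        ring
      rw [hxy, eChar_add]; ring
    simp_rw [Finset.mul_sum, comb] at S
    rw [Finset.sum_comm] at S
    simp_rw [← Finset.mul_sum, orth p n] at S
    have hcz : (Fintype.card (GaloisField p n) : ℂ) ≠ 0 :=
      Nat.cast_ne_zero.mpr Fintype.card_ne_zero
    rw [Finset.sum_eq_single u
      (fun v _ hv => by rw [if_neg (sub_ne_zero_of_ne (Ne.symm hv)), mul_zero])
      (fun hu => absurd (Finset.mem_univ u) hu)] at S
    rw [sub_self, if_pos rfl] at S
    exact (mul_eq_zero.mp S).resolve_right hcz
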